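/- Let g : ℝ² → ℂ satisfy |g(ξ)| ≤ C (1 + ‖ξ‖²)^{−2} for some C > 0, let ξ₀ ∈ ℝ², and let (r_ħ)_{ħ∈(0,1]} be positive numbers with r_ħ ħ^{1/2} → +∞ as ħ → 0⁺. Then ħ Σ_{m ∈ ℤ², ‖m − ξ₀/ħ‖ ≥ r_ħ} |g(ħ^{1/2}(m − ξ₀/ħ))| → 0 as ħ → 0⁺; equivalently, the tail sum Σ_{‖m − ξ₀/ħ‖ ≥ r_ħ} ħ^{1/2} |g(ħ^{1/2}(m − ξ₀/ħ))| is o(ħ^{−1/2}). -/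

import Mathlib

open MeasureTheory Filter Real
open scoped Topology

noncomputable section

/-- The Euclidean inner product on `ℝ²`. -/
def dot2 (v w : ℝ × ℝ) : ℝ := v.1 * w.1 + v.2 * w.2

/-- The Euclidean norm on `ℝ²`. -/
def nrm2 (v : ℝ × ℝ) : ℝ := Real.sqrt (dot2 v v)

/-- The canonical embedding `ℤ² ↪ ℝ²`. -/
def toR2 (m : ℤ × ℤ) : ℝ × ℝ := ((m.1 : ℝ), (m.2 : ℝ))

/-- Rotation of an integer vector by `+π/2`. -/
def perpZ (v : ℤ × ℤ) : ℤ × ℤ := (-v.2, v.1)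

/-- `v` generates a primitive rank-1 sublattice `Λ = ℤ v` of `ℤ²`. -/
def Primitive (v : ℤ × ℤ) : Prop := Int.gcd v.1 v.2 = 1

/-- `L_Λ = ‖v_Λ‖`. -/
def LL (v : ℤ × ℤ) : ℝ := nrm2 (toR2 v)

/-- `H_Λ(ξ) = ⟨ξ, v_Λ⟩ / L_Λ`, where `v` is the generator `v_Λ` of `Λ`. -/
def HH (v : ℤ × ℤ) (ξ : ℝ × ℝ) : ℝ := dot2 ξ (toR2 v) / LL v

/-- Integral over a fundamental domain of the torus `𝕋² = ℝ²/ℤ²`. -/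
def torusInt (f : ℝ × ℝ → ℂ) : ℂ :=
  ∫ x in Set.Icc ((0, 0) : ℝ × ℝ) ((1, 1) : ℝ × ℝ), f x

/-- `e^{it}`. -/
def expI (t : ℝ) : ℂ := Complex.exp (Complex.I * (t : ℂ))

set_option maxHeartbeats 1000000

lemma telescope_hasSum (ρ : ℝ) (hρ : 0 < ρ) :
    HasSum (fun k : ℕ => (ρ + k)⁻¹ - (ρ + k + 1)⁻¹) ρ⁻¹ := by
  have hpos : ∀ k : ℕ, (0:ℝ) < ρ + k := fun k => by positivity
  rw [hasSum_iff_tendsto_nat_of_nonneg]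
  · have hps : ∀ n : ℕ, ∑ i ∈ Finset.range n, ((ρ + i)⁻¹ - (ρ + i + 1)⁻¹)
        = ρ⁻¹ - (ρ + n)⁻¹ := by
      intro n
      have := Finset.sum_range_sub' (fun i : ℕ => (ρ + (i:ℝ))⁻¹) n
      rw [show (ρ+((0:ℕ):ℝ))⁻¹ = ρ⁻¹ by norm_num] at this
      rw [← this]
      apply Finset.sum_congr rfl
      intro i _
      push_cast
      ring_nf
    simp only [hps]
    have : Tendsto (fun n : ℕ => (ρ + n)⁻¹) atTop (nhds 0) := by
      apply Tendsto.inv_tendsto_atTop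
      exact tendsto_atTop_add_const_left _ ρ tendsto_natCast_atTop_atTop
    simpa using tendsto_const_nhds.sub this
  · intro k
    have h1 : (0:ℝ) < ρ + k := hpos k
    have h2 : (0:ℝ) < ρ + k + 1 := by linarith
    have := inv_anti₀ h1 (by linarith : ρ + (k:ℝ) ≤ ρ + k + 1)
    linarith

lemma invsq (ρ : ℝ) (hρ : 1 ≤ ρ) :
    Summable (fun k : ℕ => ((ρ + (k:ℝ))^2)⁻¹) ∧
      ∑' k : ℕ, ((ρ + (k:ℝ))^2)⁻¹ ≤ 2/ρ := by
  have hρ0 : (0:ℝ) < ρ := by linarith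
  have hpos : ∀ k : ℕ, (0:ℝ) < ρ + k := fun k => by positivity
  have ht := telescope_hasSum ρ hρ0
  have hle : ∀ k : ℕ, ((ρ + ((k:ℝ)+1))^2)⁻¹ ≤ (ρ + k)⁻¹ - (ρ + k + 1)⁻¹ := by
    intro k
    have h1 : (0:ℝ) < ρ + k := hpos k
    have h2 : (0:ℝ) < ρ + k + 1 := by linarith
    have : (ρ + k)⁻¹ - (ρ + k + 1)⁻¹ = ((ρ+k) * (ρ+k+1))⁻¹ := by
      field_simp
      ring
    rw [this]
    apply inv_anti₀ (by positivity)
    nlinarith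
  have hsum1 : Summable (fun k : ℕ => ((ρ + ((k:ℝ)+1))^2)⁻¹) :=
    ht.summable.of_nonneg_of_le (fun k => by positivity) hle
  have hsum : Summable (fun k : ℕ => ((ρ + (k:ℝ))^2)⁻¹) := by
    rw [← summable_nat_add_iff 1]
    convert hsum1 using 2 with k
    · rfl
    push_cast
    ring
  refine ⟨hsum, ?_⟩
  rw [Summable.tsum_eq_zero_add hsum]
  have e1 : ∑' k : ℕ, ((ρ + ((k:ℕ)+1:ℕ))^2)⁻¹ ≤ ρ⁻¹ := by
    calc ∑' k : ℕ, ((ρ + ((k:ℕ)+1:ℕ))^2)⁻¹ ≤ ∑' k : ℕ, ((ρ + k)⁻¹ - (ρ + k + 1)⁻¹) := by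
          apply Summable.tsum_le_tsum _ _ ht.summable
          · intro k
            refine le_trans (le_of_eq ?_) (hle k)
            push_cast; ring_nf
          · convert hsum1 using 2 with k; push_cast; ring
      _ = ρ⁻¹ := ht.tsum_eq
  have e0 : ((ρ + ((0:ℕ):ℝ))^2)⁻¹ ≤ ρ⁻¹ := by
    simp only [Nat.cast_zero, add_zero]
    have : ρ ≤ ρ^2 := by nlinarith
    have := inv_anti₀ hρ0 this
    linarith
  have : (2:ℝ)/ρ = ρ⁻¹ + ρ⁻¹ := by field_simp; ring
  rw [this]
  push_cast at e0 e1 ⊢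
  simp only [add_zero] at e0 ⊢
  exact add_le_add e0 e1

lemma natBase (h : ℝ) (h0 : 0 < h) (h1 : h ≤ 1) :
    Summable (fun k : ℕ => (1 + h * (k:ℝ)^2)⁻¹) ∧
      ∑' k : ℕ, (1 + h * (k:ℝ)^2)⁻¹ ≤ 5 / Real.sqrt h := by
  have hs0 : 0 < Real.sqrt h := Real.sqrt_pos.mpr h0
  have hs1 : Real.sqrt h ≤ 1 := by
    rw [show (1:ℝ) = Real.sqrt 1 by simp]
    exact Real.sqrt_le_sqrt h1
  have hsinv : 1 ≤ (Real.sqrt h)⁻¹ := by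
    rw [le_inv_comm₀ one_pos hs0]; simpa using hs1
  have hsq : Real.sqrt h * Real.sqrt h = h := Real.mul_self_sqrt h0.le
  -- summability
  have hsum : Summable (fun k : ℕ => (1 + h * (k:ℝ)^2)⁻¹) := by
    have hmaj : ∀ k : ℕ, (1 + h * (k:ℝ)^2)⁻¹ ≤ (2/h) * (((1:ℝ) + (k:ℝ))^2)⁻¹ := by
      intro k
      rw [show (2:ℝ)/h * (((1:ℝ)+(k:ℝ))^2)⁻¹ = ((h/2) * ((1:ℝ)+(k:ℝ))^2)⁻¹ by
        rw [mul_inv]; congr 1; field_simp]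
      apply inv_anti₀ (by positivity)
      have : (0:ℝ) ≤ (k:ℝ) := Nat.cast_nonneg k
      nlinarith [sq_nonneg ((k:ℝ) - 1)]
    exact Summable.of_nonneg_of_le (fun k => by positivity) hmaj
      (((invsq 1 le_rfl).1).mul_left _)
  refine ⟨hsum, ?_⟩
  set N : ℕ := ⌈(Real.sqrt h)⁻¹⌉₊ + 1 with hN
  have hNge : (Real.sqrt h)⁻¹ ≤ (N:ℝ) := by
    rw [hN]
    push_cast
    have := Nat.le_ceil (Real.sqrt h)⁻¹
    linarith
  have hN1 : (1:ℝ) ≤ (N:ℝ) := le_trans hsinv hNge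
  have hNle : (N:ℝ) ≤ 3 / Real.sqrt h := by
    rw [hN]
    push_cast
    have := Nat.ceil_lt_add_one (le_of_lt (by positivity : (0:ℝ) < (Real.sqrt h)⁻¹))
    have h3 : (3:ℝ)/Real.sqrt h = (Real.sqrt h)⁻¹ + (Real.sqrt h)⁻¹ + (Real.sqrt h)⁻¹ := by
      field_simp; ring
    rw [h3]
    linarith
  rw [← Summable.sum_add_tsum_nat_add N hsum]
  have hfirst : ∑ i ∈ Finset.range N, (1 + h * (i:ℝ)^2)⁻¹ ≤ (N:ℝ) := by
    calc ∑ i ∈ Finset.range N, (1 + h * (i:ℝ)^2)⁻¹ ≤ ∑ i ∈ Finset.range N, (1:ℝ) := by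
          apply Finset.sum_le_sum
          intro i _
          rw [show (1:ℝ) = (1:ℝ)⁻¹ by norm_num]
          apply inv_anti₀ one_pos
          nlinarith [sq_nonneg (i:ℝ)]
      _ = (N:ℝ) := by simp
  have hsecond : ∑' i : ℕ, (1 + h * ((i + N : ℕ):ℝ)^2)⁻¹ ≤ 2 / Real.sqrt h := by
    have step : ∀ i : ℕ, (1 + h * ((i + N : ℕ):ℝ)^2)⁻¹ ≤ h⁻¹ * (((N:ℝ) + (i:ℝ))^2)⁻¹ := by
      intro i
      rw [show h⁻¹ * (((N:ℝ)+(i:ℝ))^2)⁻¹ = (h * ((N:ℝ)+(i:ℝ))^2)⁻¹ by rw [mul_inv]]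
      apply inv_anti₀ (by positivity)
      push_cast
      nlinarith
    calc ∑' i : ℕ, (1 + h * ((i + N : ℕ):ℝ)^2)⁻¹
        ≤ ∑' i : ℕ, h⁻¹ * (((N:ℝ) + (i:ℝ))^2)⁻¹ := by
          apply Summable.tsum_le_tsum step ((summable_nat_add_iff N).2 hsum)
          exact ((invsq (N:ℝ) hN1).1).mul_left _
      _ = h⁻¹ * ∑' i : ℕ, (((N:ℝ) + (i:ℝ))^2)⁻¹ := tsum_mul_left
      _ ≤ h⁻¹ * (2 / (N:ℝ)) := by
          apply mul_le_mul_of_nonneg_left ((invsq (N:ℝ) hN1).2) (by positivity)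
      _ ≤ 2 / Real.sqrt h := by
          have hdN : 2 / (N:ℝ) ≤ 2 * Real.sqrt h := by
            rw [div_le_iff₀ (by positivity)]
            have h2 : (1:ℝ) ≤ Real.sqrt h * (N:ℝ) := by
              rw [← mul_inv_cancel₀ (ne_of_gt hs0)]
              exact mul_le_mul_of_nonneg_left hNge hs0.le
            nlinarith
          calc h⁻¹ * (2/(N:ℝ)) ≤ h⁻¹ * (2 * Real.sqrt h) :=
                mul_le_mul_of_nonneg_left hdN (by positivity)
            _ = 2 / Real.sqrt h := by
                rw [eq_div_iff (ne_of_gt hs0)]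
                field_simp
                nlinarith [hsq]
  have : (5:ℝ)/Real.sqrt h = 3/Real.sqrt h + 2/Real.sqrt h := by field_simp; ring
  rw [this]
  exact add_le_add (hfirst.trans hNle) hsecond

lemma intSplit (f : ℤ → ℝ) (g : ℕ → ℝ) (hf0 : ∀ n, 0 ≤ f n) (hg : Summable g)
    (n₀ : ℤ) (h1 : ∀ k : ℕ, f (n₀ + k) ≤ g k) (h2 : ∀ k : ℕ, f (n₀ - 1 - k) ≤ g k) :
    Summable f ∧ ∑' n, f n ≤ 2 * ∑' k, g k := by
  set F : ℤ → ℝ := fun n => f (n + n₀) with hF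
  have e1 : ∀ k : ℕ, F (k:ℤ) = f (n₀ + k) := fun k => by simp [hF, add_comm]
  have e2 : ∀ k : ℕ, F (-((k:ℤ)+1)) = f (n₀ - 1 - k) := fun k => by
    simp only [hF]
    congr 1
    ring
  have s1 : Summable (fun k : ℕ => F (k:ℤ)) :=
    hg.of_nonneg_of_le (fun k => hf0 _) (fun k => (e1 k) ▸ h1 k)
  have s2 : Summable (fun k : ℕ => F (-((k:ℤ)+1))) :=
    hg.of_nonneg_of_le (fun k => hf0 _) (fun k => (e2 k) ▸ h2 k)
  have sF : Summable F := Summable.of_nat_of_neg_add_one s1 s2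
  have hsf : Summable f := (Equiv.addRight n₀).summable_iff.mp sF
  refine ⟨hsf, ?_⟩
  have ht : ∑' n, f n = ∑' n, F n := ((Equiv.addRight n₀).tsum_eq f).symm
  rw [ht, tsum_of_nat_of_neg_add_one s1 s2]
  have b1 : ∑' k : ℕ, F (k:ℤ) ≤ ∑' k, g k :=
    Summable.tsum_le_tsum (fun k => (e1 k) ▸ h1 k) s1 hg
  have b2 : ∑' k : ℕ, F (-((k:ℤ)+1)) ≤ ∑' k, g k :=
    Summable.tsum_le_tsum (fun k => (e2 k) ▸ h2 k) s2 hg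
  linarith

lemma intBase (h c : ℝ) (h0 : 0 < h) (h1 : h ≤ 1) :
    Summable (fun n : ℤ => (1 + h * ((n:ℝ) - c)^2)⁻¹) ∧
      ∑' n : ℤ, (1 + h * ((n:ℝ) - c)^2)⁻¹ ≤ 10 / Real.sqrt h := by
  obtain ⟨hgs, hgb⟩ := natBase h h0 h1
  have key : ∀ x : ℝ, ∀ k : ℕ, (k:ℝ) ≤ |x| →
      (1 + h * x^2)⁻¹ ≤ (1 + h * (k:ℝ)^2)⁻¹ := by
    intro x k hk
    apply inv_anti₀ (by positivity)
    have : (k:ℝ)^2 ≤ x^2 := by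
      have := sq_abs x
      nlinarith [Nat.cast_nonneg (α := ℝ) k, abs_nonneg x]
    nlinarith
  obtain ⟨hs, hb⟩ := intSplit (fun n : ℤ => (1 + h * ((n:ℝ) - c)^2)⁻¹)
    (fun k : ℕ => (1 + h * (k:ℝ)^2)⁻¹) (fun n => by positivity) hgs ⌈c⌉
    (by
      intro k
      apply key
      have h1 : c ≤ (⌈c⌉:ℝ) := Int.le_ceil c
      have : (k:ℝ) ≤ ((⌈c⌉:ℤ):ℝ) + (k:ℝ) - c := by linarith
      calc (k:ℝ) ≤ ((⌈c⌉:ℤ):ℝ) + (k:ℝ) - c := this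
        _ ≤ |((⌈c⌉ + (k:ℤ) : ℤ):ℝ) - c| := by
            push_cast
            exact le_abs_self _ |>.trans (by rw [abs_of_nonneg] <;> push_cast <;> nlinarith [Nat.cast_nonneg (α := ℝ) k])
      )
    (by
      intro k
      apply key
      have h2 : ((⌈c⌉:ℤ):ℝ) < c + 1 := Int.ceil_lt_add_one c
      have : (k:ℝ) ≤ c - (((⌈c⌉:ℤ):ℝ) - 1 - k) := by linarith
      calc (k:ℝ) ≤ -((((⌈c⌉ - 1 - (k:ℤ)):ℤ):ℝ) - c) := by push_cast; linarith
        _ ≤ |(((⌈c⌉ - 1 - (k:ℤ)):ℤ):ℝ) - c| := neg_le_abs _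
      )
  refine ⟨hs, hb.trans ?_⟩
  have : (10:ℝ)/Real.sqrt h = 2 * (5/Real.sqrt h) := by ring
  rw [this]
  have hs0 : (0:ℝ) < Real.sqrt h := Real.sqrt_pos.mpr h0
  nlinarith [hgb]

lemma intTail (h c ρ : ℝ) (h0 : 0 < h) (hρ : 1 ≤ ρ) :
    Summable (fun n : ℤ => if ρ^2 ≤ ((n:ℝ) - c)^2 then (1 + h * ((n:ℝ) - c)^2)⁻¹ else 0) ∧
      ∑' n : ℤ, (if ρ^2 ≤ ((n:ℝ) - c)^2 then (1 + h * ((n:ℝ) - c)^2)⁻¹ else 0)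
        ≤ 16 / (h * ρ) := by
  obtain ⟨hgs0, hgb0⟩ := invsq ρ hρ
  have hgs : Summable (fun k : ℕ => (4/h) * ((ρ + (k:ℝ))^2)⁻¹) := hgs0.mul_left _
  have key : ∀ x : ℝ, ∀ k : ℕ, (k:ℝ) ≤ |x| →
      (if ρ^2 ≤ x^2 then (1 + h * x^2)⁻¹ else 0) ≤ (4/h) * ((ρ + (k:ℝ))^2)⁻¹ := by
    intro x k hk
    split_ifs with hcond
    · have hxρ : ρ ≤ |x| := by nlinarith [sq_abs x, abs_nonneg x]
      have habs : ρ + (k:ℝ) ≤ 2 * |x| := by linarith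
      have hx2 : ((ρ + (k:ℝ))/2)^2 ≤ x^2 := by
        rw [← sq_abs x]
        have h2 : (0:ℝ) ≤ (ρ + (k:ℝ))/2 := by positivity
        nlinarith
      rw [show (4:ℝ)/h * ((ρ + (k:ℝ))^2)⁻¹ = (h * ((ρ + (k:ℝ))/2)^2)⁻¹ by
        rw [mul_inv]; field_simp; ring]
      apply inv_anti₀ (by positivity)
      nlinarith
    · positivity
  obtain ⟨hs, hb⟩ := intSplit
    (fun n : ℤ => if ρ^2 ≤ ((n:ℝ) - c)^2 then (1 + h * ((n:ℝ) - c)^2)⁻¹ else 0)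
    (fun k : ℕ => (4/h) * ((ρ + (k:ℝ))^2)⁻¹)
    (fun n => by positivity) hgs ⌈c⌉
    (by
      intro k
      apply key
      have h1 : c ≤ (⌈c⌉:ℝ) := Int.le_ceil c
      calc (k:ℝ) ≤ ((⌈c⌉ + (k:ℤ) : ℤ):ℝ) - c := by push_cast; linarith
        _ ≤ |((⌈c⌉ + (k:ℤ) : ℤ):ℝ) - c| := le_abs_self _)
    (by
      intro k
      apply key
      have h2 : ((⌈c⌉:ℤ):ℝ) < c + 1 := Int.ceil_lt_add_one c
      calc (k:ℝ) ≤ -((((⌈c⌉ - 1 - (k:ℤ)):ℤ):ℝ) - c) := by push_cast; linarith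
        _ ≤ |(((⌈c⌉ - 1 - (k:ℤ)):ℤ):ℝ) - c| := neg_le_abs _)
  refine ⟨hs, hb.trans ?_⟩
  have e : ∑' k : ℕ, (4/h) * ((ρ + (k:ℝ))^2)⁻¹ = (4/h) * ∑' k : ℕ, ((ρ + (k:ℝ))^2)⁻¹ :=
    tsum_mul_left
  rw [e]
  have hρ0 : (0:ℝ) < ρ := by linarith
  have : (4:ℝ)/h * (2/ρ) = 8/(h*ρ) := by field_simp; ring
  calc 2 * ((4/h) * ∑' k : ℕ, ((ρ + (k:ℝ))^2)⁻¹) ≤ 2 * ((4/h) * (2/ρ)) := by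
        apply mul_le_mul_of_nonneg_left _ (by norm_num)
        exact mul_le_mul_of_nonneg_left hgb0 (by positivity)
    _ = 16/(h*ρ) := by field_simp; ring


lemma nrm2_sq (v : ℝ × ℝ) : nrm2 v ^ 2 = v.1^2 + v.2^2 := by
  have h : 0 ≤ dot2 v v := by
    simp only [dot2]; nlinarith [mul_self_nonneg v.1, mul_self_nonneg v.2]
  rw [nrm2, Real.sq_sqrt h]; simp only [dot2]; ring

lemma tsum_prod_mul {f g : ℤ → ℝ} (hf : Summable f) (hg : Summable g)
    (hf0 : ∀ n, 0 ≤ f n) (hg0 : ∀ n, 0 ≤ g n) :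
    ∑' m : ℤ × ℤ, f m.1 * g m.2 = (∑' n, f n) * (∑' n, g n) := by
  have hf' : Summable fun n => ‖f n‖ := by
    have := hf.abs
    simpa [Real.norm_eq_abs] using this
  have hg' : Summable fun n => ‖g n‖ := by
    have := hg.abs
    simpa [Real.norm_eq_abs] using this
  exact (tsum_mul_tsum_of_summable_norm hf' hg').symm

lemma perTerm (hb C : ℝ) (g : ℝ × ℝ → ℂ) (hC : 0 < C)
    (hg : ∀ ξ : ℝ × ℝ, ‖g ξ‖ ≤ C / (1 + nrm2 ξ ^ 2) ^ 2)
    (hb0 : 0 < hb) (R ρ : ℝ) (hRpos : 0 < R) (hρ2 : 2 * ρ^2 = R^2) (a b : ℝ) :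
    (if R ≤ nrm2 (a, b) then ‖g (Real.sqrt hb • ((a, b) : ℝ × ℝ))‖ else 0)
      ≤ C * ((if ρ^2 ≤ a^2 then (1 + hb * a^2)⁻¹ else 0) * (1 + hb * b^2)⁻¹)
        + C * ((1 + hb * a^2)⁻¹ * (if ρ^2 ≤ b^2 then (1 + hb * b^2)⁻¹ else 0)) := by
  have hA : (0:ℝ) < 1 + hb * a^2 := by positivity
  have hB : (0:ℝ) < 1 + hb * b^2 := by positivity
  have hu1n : (0:ℝ) ≤ (if ρ^2 ≤ a^2 then (1 + hb * a^2)⁻¹ else 0) := by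
    split_ifs; exacts [by positivity, le_rfl]
  have hu2n : (0:ℝ) ≤ (if ρ^2 ≤ b^2 then (1 + hb * b^2)⁻¹ else 0) := by
    split_ifs; exacts [by positivity, le_rfl]
  by_cases hcond : R ≤ nrm2 (a, b)
  · rw [if_pos hcond]
    have hns : nrm2 ((a, b) : ℝ × ℝ) ^ 2 = a^2 + b^2 := by rw [nrm2_sq]
    have hR2 : R^2 ≤ a^2 + b^2 := by
      have := pow_le_pow_left₀ hRpos.le hcond 2
      rw [hns] at this; exact this
    have hg1 := hg (Real.sqrt hb • ((a, b) : ℝ × ℝ))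
    have hsmul : (Real.sqrt hb • ((a, b) : ℝ × ℝ)) = (Real.sqrt hb * a, Real.sqrt hb * b) := rfl
    have hnorm : nrm2 (Real.sqrt hb • ((a, b) : ℝ × ℝ)) ^ 2 = hb * (a^2 + b^2) := by
      rw [hsmul, nrm2_sq]
      simp only
      rw [mul_pow, mul_pow, Real.sq_sqrt hb0.le]
      ring
    rw [hnorm] at hg1
    have hprod : C / (1 + hb * (a^2 + b^2))^2 ≤ C * ((1 + hb * a^2)⁻¹ * (1 + hb * b^2)⁻¹) := by
      rw [div_eq_mul_inv, ← mul_inv]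
      apply mul_le_mul_of_nonneg_left _ hC.le
      apply inv_anti₀ (by positivity)
      nlinarith [sq_nonneg a, sq_nonneg b, hb0.le, sq_nonneg (a^2 - b^2), sq_nonneg hb,
        mul_nonneg (sq_nonneg a) (sq_nonneg b), mul_nonneg hb0.le (sq_nonneg a),
        mul_nonneg hb0.le (sq_nonneg b)]
    rcases le_or_gt (ρ^2) (a^2) with hca | hca
    · rw [if_pos hca]
      refine le_trans (hg1.trans hprod) ?_
      exact le_add_of_nonneg_right (mul_nonneg hC.le (mul_nonneg (by positivity) hu2n))
    · have hcb : ρ^2 ≤ b^2 := by nlinarith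
      rw [if_pos hcb]
      refine le_trans (hg1.trans hprod) ?_
      have heq : C * ((1 + hb * a^2)⁻¹ * (1 + hb * b^2)⁻¹)
          = C * ((1 + hb * a^2)⁻¹ * (1 + hb * b^2)⁻¹) := rfl
      exact le_add_of_nonneg_left (mul_nonneg hC.le (mul_nonneg hu1n (by positivity)))
  · rw [if_neg hcond]
    exact add_nonneg (mul_nonneg hC.le (mul_nonneg hu1n (by positivity)))
      (mul_nonneg hC.le (mul_nonneg (by positivity) hu2n))

/-- linear tail bound for the rescaled lattice sums outside balls of
radii `r_hb ≫ hb^{-1/2}` centered at `ξ₀/hb`; equivalently the tail sum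
`Σ_{‖m - ξ₀/hb‖ ≥ r_hb} hb^{1/2} |g(hb^{1/2}(m - ξ₀/hb))|` is `o(hb^{-1/2})`. -/
theorem stmt10
    (g : ℝ × ℝ → ℂ) (C : ℝ) (hC : 0 < C)
    (hg : ∀ ξ : ℝ × ℝ, ‖g ξ‖ ≤ C / (1 + nrm2 ξ ^ 2) ^ 2)
    (ξ₀ : ℝ × ℝ) (r : ℝ → ℝ) (hr : ∀ hb ∈ Set.Ioc (0:ℝ) 1, 0 < r hb)
    (hrinf : Tendsto (fun hb => r hb * Real.sqrt hb) (𝓝[>] (0:ℝ)) atTop) :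
    Tendsto
      (fun hb => hb * ∑' m : ℤ × ℤ,
        if r hb ≤ nrm2 (toR2 m - hb⁻¹ • ξ₀) then
          ‖g (Real.sqrt hb • (toR2 m - hb⁻¹ • ξ₀))‖ else 0)
      (𝓝[>] (0:ℝ)) (𝓝 0) := by
  have hbound : Tendsto (fun hb : ℝ => 640 * C * (r hb * Real.sqrt hb)⁻¹)
      (𝓝[>] (0:ℝ)) (𝓝 0) := by
    have h1 := hrinf.inv_tendsto_atTop
    have h2 := h1.const_mul (640 * C)
    simpa using h2
  have hev : ∀ᶠ hb in 𝓝[>] (0:ℝ), 0 < hb ∧ hb ≤ 1 ∧ Real.sqrt 2 ≤ r hb := by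
    have h0 : ∀ᶠ hb in 𝓝[>] (0:ℝ), hb ∈ Set.Ioi (0:ℝ) := eventually_mem_nhdsWithin
    have h1 : ∀ᶠ hb in 𝓝[>] (0:ℝ), hb < 1 := by
      have ht : Tendsto (fun hb : ℝ => hb) (𝓝[>] (0:ℝ)) (𝓝 0) :=
        tendsto_id.mono_left nhdsWithin_le_nhds
      exact ht.eventually_lt_const one_pos
    have h2 : ∀ᶠ hb in 𝓝[>] (0:ℝ), Real.sqrt 2 ≤ r hb * Real.sqrt hb :=
      hrinf.eventually_ge_atTop _
    filter_upwards [h0, h1, h2] with hb hb0 hb1 hb2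
    refine ⟨hb0, hb1.le, ?_⟩
    have hrpos : 0 < r hb := hr hb ⟨hb0, hb1.le⟩
    have hsle : Real.sqrt hb ≤ 1 := by
      rw [show (1:ℝ) = Real.sqrt 1 by simp]
      exact Real.sqrt_le_sqrt hb1.le
    nlinarith [hb2]
  apply squeeze_zero' ?_ ?_ hbound
  · filter_upwards [hev] with hb hhb
    apply mul_nonneg hhb.1.le
    apply tsum_nonneg
    intro m
    split_ifs
    exacts [norm_nonneg _, le_rfl]
  · filter_upwards [hev] with hb hhb
    obtain ⟨hb0, hb1, hbr⟩ := hhb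
    have hs2 : (0:ℝ) < Real.sqrt 2 := by positivity
    have hRpos : 0 < r hb := lt_of_lt_of_le hs2 hbr
    have hsb : 0 < Real.sqrt hb := Real.sqrt_pos.mpr hb0
    set R := r hb with hRdef
    set ρ := R / Real.sqrt 2 with hρdef
    have hρ1 : (1:ℝ) ≤ ρ := (one_le_div hs2).mpr hbr
    have hρ0 : (0:ℝ) < ρ := lt_of_lt_of_le one_pos hρ1
    have hρ2 : 2 * ρ^2 = R^2 := by
      rw [hρdef, div_pow, Real.sq_sqrt (by norm_num : (0:ℝ) ≤ 2)]
      field_simp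
    set c1 := hb⁻¹ * ξ₀.1 with hc1
    set c2 := hb⁻¹ * ξ₀.2 with hc2
    have hab : ∀ m : ℤ × ℤ, toR2 m - hb⁻¹ • ξ₀ = (((m.1:ℝ) - c1), ((m.2:ℝ) - c2)) := by
      intro m
      rw [hc1, hc2]
      ext <;> simp [toR2, Prod.smul_def, smul_eq_mul] <;> ring
    obtain ⟨sU1, bU1⟩ := intTail hb c1 ρ hb0 hρ1
    obtain ⟨sU2, bU2⟩ := intTail hb c2 ρ hb0 hρ1
    obtain ⟨sV1, bV1⟩ := intBase hb c1 hb0 hb1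
    obtain ⟨sV2, bV2⟩ := intBase hb c2 hb0 hb1
    have hu1n : ∀ n : ℤ, (0:ℝ) ≤ (if ρ^2 ≤ ((n:ℝ) - c1)^2 then (1 + hb * ((n:ℝ) - c1)^2)⁻¹ else 0) := by
      intro n; split_ifs; exacts [by positivity, le_rfl]
    have hu2n : ∀ n : ℤ, (0:ℝ) ≤ (if ρ^2 ≤ ((n:ℝ) - c2)^2 then (1 + hb * ((n:ℝ) - c2)^2)⁻¹ else 0) := by
      intro n; split_ifs; exacts [by positivity, le_rfl]
    have hv1n : ∀ n : ℤ, (0:ℝ) ≤ (1 + hb * ((n:ℝ) - c1)^2)⁻¹ := fun n => by positivity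
    have hv2n : ∀ n : ℤ, (0:ℝ) ≤ (1 + hb * ((n:ℝ) - c2)^2)⁻¹ := fun n => by positivity
    -- majorant
    have sM1 : Summable (fun m : ℤ × ℤ =>
        (if ρ^2 ≤ ((m.1:ℝ) - c1)^2 then (1 + hb * ((m.1:ℝ) - c1)^2)⁻¹ else 0)
          * (1 + hb * ((m.2:ℝ) - c2)^2)⁻¹) :=
      Summable.mul_of_nonneg sU1 sV2 (fun n => hu1n n) (fun n => hv2n n)
    have sM2 : Summable (fun m : ℤ × ℤ =>
        (1 + hb * ((m.1:ℝ) - c1)^2)⁻¹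
          * (if ρ^2 ≤ ((m.2:ℝ) - c2)^2 then (1 + hb * ((m.2:ℝ) - c2)^2)⁻¹ else 0)) :=
      Summable.mul_of_nonneg sV1 sU2 (fun n => hv1n n) (fun n => hu2n n)
    have sM : Summable (fun m : ℤ × ℤ =>
        C * ((if ρ^2 ≤ ((m.1:ℝ) - c1)^2 then (1 + hb * ((m.1:ℝ) - c1)^2)⁻¹ else 0)
              * (1 + hb * ((m.2:ℝ) - c2)^2)⁻¹)
        + C * ((1 + hb * ((m.1:ℝ) - c1)^2)⁻¹
              * (if ρ^2 ≤ ((m.2:ℝ) - c2)^2 then (1 + hb * ((m.2:ℝ) - c2)^2)⁻¹ else 0))) :=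
      (sM1.mul_left C).add (sM2.mul_left C)
    have hterm : ∀ m : ℤ × ℤ,
        (if R ≤ nrm2 (toR2 m - hb⁻¹ • ξ₀) then
          ‖g (Real.sqrt hb • (toR2 m - hb⁻¹ • ξ₀))‖ else 0)
        ≤ C * ((if ρ^2 ≤ ((m.1:ℝ) - c1)^2 then (1 + hb * ((m.1:ℝ) - c1)^2)⁻¹ else 0)
              * (1 + hb * ((m.2:ℝ) - c2)^2)⁻¹)
          + C * ((1 + hb * ((m.1:ℝ) - c1)^2)⁻¹
              * (if ρ^2 ≤ ((m.2:ℝ) - c2)^2 then (1 + hb * ((m.2:ℝ) - c2)^2)⁻¹ else 0)) := by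
      intro m
      rw [hab m]
      exact perTerm hb C g hC hg hb0 R ρ hRpos hρ2 _ _
    have sTerm : Summable (fun m : ℤ × ℤ =>
        if R ≤ nrm2 (toR2 m - hb⁻¹ • ξ₀) then
          ‖g (Real.sqrt hb • (toR2 m - hb⁻¹ • ξ₀))‖ else 0) := by
      apply Summable.of_nonneg_of_le _ hterm sM
      intro m; split_ifs; exacts [norm_nonneg _, le_rfl]
    have htsum : (∑' m : ℤ × ℤ, if R ≤ nrm2 (toR2 m - hb⁻¹ • ξ₀) then
          ‖g (Real.sqrt hb • (toR2 m - hb⁻¹ • ξ₀))‖ else 0)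
        ≤ C * ((16 / (hb * ρ)) * (10 / Real.sqrt hb))
          + C * ((10 / Real.sqrt hb) * (16 / (hb * ρ))) := by
      refine (Summable.tsum_le_tsum hterm sTerm sM).trans ?_
      rw [Summable.tsum_add (sM1.mul_left C) (sM2.mul_left C), tsum_mul_left, tsum_mul_left,
        tsum_prod_mul sU1 sV2 hu1n hv2n, tsum_prod_mul sV1 sU2 hv1n hu2n]
      have t1 : (0:ℝ) ≤ ∑' n : ℤ, (if ρ^2 ≤ ((n:ℝ) - c1)^2 then (1 + hb * ((n:ℝ) - c1)^2)⁻¹ else 0) :=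
        tsum_nonneg hu1n
      have t2 : (0:ℝ) ≤ ∑' n : ℤ, (1 + hb * ((n:ℝ) - c2)^2)⁻¹ := tsum_nonneg hv2n
      have t3 : (0:ℝ) ≤ ∑' n : ℤ, (1 + hb * ((n:ℝ) - c1)^2)⁻¹ := tsum_nonneg hv1n
      have t4 : (0:ℝ) ≤ ∑' n : ℤ, (if ρ^2 ≤ ((n:ℝ) - c2)^2 then (1 + hb * ((n:ℝ) - c2)^2)⁻¹ else 0) :=
        tsum_nonneg hu2n
      exact add_le_add
        (mul_le_mul_of_nonneg_left (mul_le_mul bU1 bV2 t2 (by positivity)) hC.le)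
        (mul_le_mul_of_nonneg_left (mul_le_mul bV1 bU2 t4 (by positivity)) hC.le)
    calc hb * (∑' m : ℤ × ℤ, if R ≤ nrm2 (toR2 m - hb⁻¹ • ξ₀) then
            ‖g (Real.sqrt hb • (toR2 m - hb⁻¹ • ξ₀))‖ else 0)
        ≤ hb * (C * ((16 / (hb * ρ)) * (10 / Real.sqrt hb))
            + C * ((10 / Real.sqrt hb) * (16 / (hb * ρ)))) :=
          mul_le_mul_of_nonneg_left htsum hb0.le
      _ = 320 * C * Real.sqrt 2 / (R * Real.sqrt hb) := by
          rw [hρdef]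
          field_simp
          ring
      _ ≤ 640 * C * (R * Real.sqrt hb)⁻¹ := by
          rw [div_eq_mul_inv]
          apply mul_le_mul_of_nonneg_right _ (by positivity)
          have hsqrt2 : Real.sqrt 2 ≤ 2 := by
            nlinarith [Real.sq_sqrt (show (0:ℝ) ≤ 2 by norm_num), Real.sqrt_nonneg 2]
          nlinarith
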